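/- Every homogeneous element of A (with respect to any grading by an abelian group G such that the identity component contains only multiples of the identity modulo the radical) is either nilpotent or invertible. More precisely: if a ∈ A is a non-nilpotent element of a homogeneous component A_g in a G-grading of A where A_{1_G}/J(A_{1_G}) ≅ K·E, then a is invertible. -/

import Mathlib

/-- The subalgebra `A` of `UT₃(K)` spanned by `e₁₁+e₃₃, e₂₂, e₁₂, e₂₃, e₁₃`,
as a submodule of the 3×3 matrices. -/
def matAlgA (K : Type*) [Field K] : Submodule K (Matrix (Fin 3) (Fin 3) K) :=
  Submodule.span K
    {!![1,0,0;0,0,0;0,0,1], !![0,0,0;0,1,0;0,0,0], !![0,1,0;0,0,0;0,0,0],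
     !![0,0,0;0,0,1;0,0,0], !![0,0,1;0,0,0;0,0,0]}


private def matP {K : Type*} [Field K] (M : Matrix (Fin 3) (Fin 3) K) : Prop :=
  M 1 0 = 0 ∧ M 2 0 = 0 ∧ M 2 1 = 0 ∧ M 2 2 = M 0 0

private lemma mem_matAlgA_iff {K : Type*} [Field K] (M : Matrix (Fin 3) (Fin 3) K) :
    M ∈ matAlgA K ↔ matP M := by
  constructor
  · intro h
    induction h using Submodule.span_induction with
    | mem x hx =>
      rcases hx with h|h|h|h|h <;> subst h <;> norm_num [matP, Matrix.vecHead, Matrix.vecTail, Matrix.cons_val_two]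
    | zero => simp [matP]
    | add x y _ _ hx hy =>
      obtain ⟨h1,h2,h3,h4⟩ := hx; obtain ⟨g1,g2,g3,g4⟩ := hy
      refine ⟨?_,?_,?_,?_⟩ <;> simp [Matrix.add_apply, h1,h2,h3,h4,g1,g2,g3,g4]
    | smul c x _ hx =>
      obtain ⟨h1,h2,h3,h4⟩ := hx
      refine ⟨?_,?_,?_,?_⟩ <;> simp [Matrix.smul_apply, h1,h2,h3,h4]
  · rintro ⟨h1,h2,h3,h4⟩
    have hM : M = M 0 0 • !![1,0,0;0,0,0;0,0,1] + M 1 1 • !![0,0,0;0,1,0;0,0,0]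
        + M 0 1 • !![0,1,0;0,0,0;0,0,0] + M 1 2 • !![0,0,0;0,0,1;0,0,0]
        + M 0 2 • !![0,0,1;0,0,0;0,0,0] := by
      ext i j
      fin_cases i <;> fin_cases j <;>
        simp_all [Matrix.add_apply, Matrix.smul_apply, Matrix.vecHead, Matrix.vecTail]
    rw [hM]
    refine Submodule.add_mem _ (Submodule.add_mem _ (Submodule.add_mem _ (Submodule.add_mem _
      ?_ ?_) ?_) ?_) ?_ <;>
    exact Submodule.smul_mem _ _ (Submodule.subset_span (by simp))

private lemma matP_mul {K : Type*} [Field K] {M N : Matrix (Fin 3) (Fin 3) K}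
    (hM : matP M) (hN : matP N) :
    matP (M * N) ∧ (M * N) 0 0 = M 0 0 * N 0 0 ∧ (M * N) 1 1 = M 1 1 * N 1 1 := by
  obtain ⟨h1,h2,h3,h4⟩ := hM; obtain ⟨g1,g2,g3,g4⟩ := hN
  refine ⟨⟨?_,?_,?_,?_⟩,?_,?_⟩ <;>
    simp [Matrix.mul_apply, Fin.sum_univ_three, h1,h2,h3,h4,g1,g2,g3,g4]

private lemma matP_pow {K : Type*} [Field K] {M : Matrix (Fin 3) (Fin 3) K}
    (hM : matP M) (n : ℕ) :
    matP (M ^ (n+1)) ∧ (M ^ (n+1)) 0 0 = (M 0 0) ^ (n+1)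
      ∧ (M ^ (n+1)) 1 1 = (M 1 1) ^ (n+1) := by
  induction n with
  | zero => simpa using hM
  | succ n ih =>
    obtain ⟨hP, h0, h1⟩ := ih
    obtain ⟨hP', h0', h1'⟩ := matP_mul hP hM
    rw [pow_succ]
    exact ⟨hP', by rw [h0', h0, ← pow_succ], by rw [h1', h1, ← pow_succ]⟩

private lemma matP_cube {K : Type*} [Field K] {M : Matrix (Fin 3) (Fin 3) K}
    (hM : matP M) (h0 : M 0 0 = 0) (h1 : M 1 1 = 0) : M ^ 3 = 0 := by
  obtain ⟨p1,p2,p3,p4⟩ := hM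
  ext i j
  fin_cases i <;> fin_cases j <;>
    simp [pow_succ, Matrix.mul_apply, Fin.sum_univ_three, p1,p2,p3,p4,h0,h1]

private lemma nilp_diag {K : Type*} [Field K] {M : Matrix (Fin 3) (Fin 3) K}
    (hM : matP M) (h : IsNilpotent M) : M 0 0 = 0 ∧ M 1 1 = 0 := by
  obtain ⟨k, hk⟩ := h
  rcases k with _ | n
  · simp at hk
  · obtain ⟨_, h0, h1⟩ := matP_pow hM n
    rw [hk] at h0 h1
    constructor
    · exact pow_eq_zero_iff (Nat.succ_ne_zero n) |>.mp (by simp [← h0])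
    · exact pow_eq_zero_iff (Nat.succ_ne_zero n) |>.mp (by simp [← h1])

private lemma matInv {K : Type*} [Field K] {M : Matrix (Fin 3) (Fin 3) K}
    (hM : matP M) (hx : M 0 0 ≠ 0) (hy : M 1 1 ≠ 0) :
    ∃ b ∈ matAlgA K, M * b = 1 ∧ b * M = 1 := by
  obtain ⟨p1,p2,p3,p4⟩ := hM
  set x := M 0 0
  set y := M 1 1
  refine ⟨!![x⁻¹, -(M 0 1) * x⁻¹ * y⁻¹, (M 0 1 * M 1 2 - M 0 2 * y) * (x*x*y)⁻¹;
      0, y⁻¹, -(M 1 2) * x⁻¹ * y⁻¹; 0, 0, x⁻¹], ?_, ?_, ?_⟩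
  · rw [mem_matAlgA_iff]
    norm_num [matP, Matrix.vecHead, Matrix.vecTail, Matrix.cons_val_two]
  · ext i j
    fin_cases i <;> fin_cases j <;>
      (simp [Matrix.mul_apply, Fin.sum_univ_three, p1,p2,p3,p4, Matrix.one_apply,
        Matrix.vecHead, Matrix.vecTail]; try field_simp) <;> ring
  · rw [mul_eq_one_comm]
    ext i j
    fin_cases i <;> fin_cases j <;>
      (simp [Matrix.mul_apply, Fin.sum_univ_three, p1,p2,p3,p4, Matrix.one_apply,
        Matrix.vecHead, Matrix.vecTail]; try field_simp) <;> ring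

/-- Let `A = ⊕_{g∈G} 𝒜 g` be a grading of `A` by an abelian group `G` such that
every element of the identity component is a scalar multiple of the identity
modulo a nilpotent (i.e. `𝒜 1 / J(𝒜 1) ≅ K·E`).  Then every non-nilpotent
homogeneous element of `A` is invertible (with inverse in `A`). -/
theorem stmt_2 (K : Type*) [Field K] (G : Type*) [CommGroup G]
    (𝒜 : G → Submodule K (Matrix (Fin 3) (Fin 3) K))
    (hle : ∀ g, 𝒜 g ≤ matAlgA K)
    (hsup : (⨆ g, 𝒜 g) = matAlgA K)
    (hind : ∀ g, Disjoint (𝒜 g) (⨆ h ∈ ({h | h ≠ g} : Set G), 𝒜 h))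
    (hmul : ∀ g h : G, ∀ x y : Matrix (Fin 3) (Fin 3) K,
      x ∈ 𝒜 g → y ∈ 𝒜 h → x * y ∈ 𝒜 (g * h))
    (hone : (1 : Matrix (Fin 3) (Fin 3) K) ∈ 𝒜 1)
    (hquot : ∀ x ∈ 𝒜 (1 : G), ∃ lam : K, IsNilpotent (x - lam • (1 : Matrix (Fin 3) (Fin 3) K)))
    (g : G) (a : Matrix (Fin 3) (Fin 3) K) (ha : a ∈ 𝒜 g)
    (hnil : ¬ IsNilpotent a) :
    ∃ b ∈ matAlgA K, a * b = 1 ∧ b * a = 1 := by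
  have hPa : matP a := (mem_matAlgA_iff a).mp (hle g ha)
  have hpow : ∀ n : ℕ, a ^ (n+1) ∈ 𝒜 (g ^ (n+1)) := by
    intro n
    induction n with
    | zero => simpa using ha
    | succ n ih =>
      have h := hmul _ _ _ _ ih ha
      rwa [← pow_succ, ← pow_succ] at h
  have hne : ¬ (a 0 0 = 0 ∧ a 1 1 = 0) := fun ⟨h0, h1⟩ => hnil ⟨3, matP_cube hPa h0 h1⟩
  have hone_or : a 0 0 ≠ 0 ∨ a 1 1 ≠ 0 := by
    by_contra hc; push_neg at hc; exact hne ⟨hc.1, hc.2⟩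
  have key : a 0 0 ≠ 0 ∧ a 1 1 ≠ 0 := by
    by_cases hfin : ∃ n : ℕ, g ^ (n+1) = 1
    · obtain ⟨n, hn⟩ := hfin
      have hmem : a ^ (n+1) ∈ 𝒜 1 := hn ▸ hpow n
      obtain ⟨lam, hlam⟩ := hquot _ hmem
      obtain ⟨hPp, h0, h1⟩ := matP_pow hPa n
      have hP' : matP (a ^ (n+1) - lam • (1 : Matrix (Fin 3) (Fin 3) K)) := by
        obtain ⟨q1, q2, q3, q4⟩ := hPp
        refine ⟨?_, ?_, ?_, ?_⟩ <;>
          simp [Matrix.sub_apply, Matrix.smul_apply, Matrix.one_apply, q1, q2, q3, q4]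
      obtain ⟨e0, e1⟩ := nilp_diag hP' hlam
      simp [Matrix.sub_apply, Matrix.smul_apply, Matrix.one_apply, h0] at e0
      simp [Matrix.sub_apply, Matrix.smul_apply, Matrix.one_apply, h1] at e1
      have hx : a 0 0 ^ (n+1) = lam := by linear_combination e0
      have hy : a 1 1 ^ (n+1) = lam := by linear_combination e1
      constructor
      · intro h
        apply hne
        refine ⟨h, ?_⟩
        have hl : lam = 0 := by rw [← hx, h]; simp
        exact pow_eq_zero_iff (Nat.succ_ne_zero n) |>.mp (hy.trans hl)
      · intro h
        apply hne
        refine ⟨?_, h⟩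
        have hl : lam = 0 := by rw [← hy, h]; simp
        exact pow_eq_zero_iff (Nat.succ_ne_zero n) |>.mp (hx.trans hl)
    · push_neg at hfin
      exfalso
      have key2 : ∀ m k : ℕ, m < k → g ^ (m+1) = g ^ (k+1) → False := by
        intro m k hmk hEq
        have h2 : g ^ ((m+1) + (k - m)) = g ^ (k+1) := by congr 1; omega
        rw [pow_add, ← hEq] at h2
        have h3 : g ^ (k - m) = 1 := mul_left_cancel (h2.trans (mul_one _).symm)
        have hkm : k - m = (k - m - 1) + 1 := by omega
        exact hfin (k - m - 1) (by rw [← hkm]; exact h3)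
      have hinj : Function.Injective (fun i : Fin 10 => g ^ ((i : ℕ) + 1)) := by
        intro i j h
        rcases lt_trichotomy (i : ℕ) (j : ℕ) with hlt | heq | hgt
        · exact absurd (key2 _ _ hlt h) id
        · exact Fin.ext heq
        · exact absurd (key2 _ _ hgt h.symm) id
      have hvne : ∀ i : Fin 10, a ^ ((i : ℕ) + 1) ≠ 0 := by
        intro i hzero
        obtain ⟨_, h0, h1⟩ := matP_pow hPa (i : ℕ)
        rw [hzero] at h0 h1
        simp only [Matrix.zero_apply] at h0 h1
        rcases hone_or with h | h
        · exact h (pow_eq_zero_iff (Nat.succ_ne_zero _) |>.mp h0.symm)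
        · exact h (pow_eq_zero_iff (Nat.succ_ne_zero _) |>.mp h1.symm)
      have hIndep : iSupIndep 𝒜 := fun i => by simpa using hind i
      have hli : LinearIndependent K (fun i : Fin 10 => a ^ ((i : ℕ) + 1)) :=
        (hIndep.comp hinj).linearIndependent _ (fun i => hpow i) hvne
      have hcard := hli.fintype_card_le_finrank
      simp [Module.finrank_matrix] at hcard
  exact matInv hPa key.1 key.2
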